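/- arXiv:math/0402295 — 2 statements merged into one kernel-verified Lean document; each statement's English description precedes it below -/
import Mathlib

section
/- For the Hopf map ψ and the horizontal vector fields X₂(x) = (1/√2)(−x³,x⁴,x¹,−x²), X₃(x) = (1/√2)(−x⁴,−x³,x²,x¹), the images dψₓ(X₂(x)) and dψₓ(X₃(x)) form an orthonormal basis of the tangent space of S²(1/√2) at ψ(x), for every x ∈ S³(√2). -/
open scoped BigOperators

/-- The Hopf map as a polynomial map ℝ⁴ → ℝ³. -/
noncomputable def hopf (x : Fin 4 → ℝ) : Fin 3 → ℝ :=
  (1 / (2 * Real.sqrt 2)) •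
    ![2 * x 0 * x 2 + 2 * x 1 * x 3,
      2 * x 1 * x 2 - 2 * x 0 * x 3,
      x 0 ^ 2 + x 1 ^ 2 - x 2 ^ 2 - x 3 ^ 2]

noncomputable def X₂ (x : Fin 4 → ℝ) : Fin 4 → ℝ :=
  (Real.sqrt 2)⁻¹ • ![-(x 2), x 3, x 0, -(x 1)]

noncomputable def X₃ (x : Fin 4 → ℝ) : Fin 4 → ℝ :=
  (Real.sqrt 2)⁻¹ • ![-(x 3), -(x 2), x 1, x 0]

lemma sqrt2_mul_self : Real.sqrt 2 * Real.sqrt 2 = 2 :=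
  Real.mul_self_sqrt (by norm_num)

lemma sqrt2_ne_zero : Real.sqrt 2 ≠ 0 := by positivity

lemma sqrt2_inv : (Real.sqrt 2)⁻¹ = Real.sqrt 2 / 2 := by
  field_simp
  rw [Real.sq_sqrt (by norm_num : (0:ℝ) ≤ 2)]

lemma hopf_coeff : (1 : ℝ) / (2 * Real.sqrt 2) = Real.sqrt 2 / 4 := by
  rw [div_eq_div_iff (by positivity) (by norm_num)]
  linear_combination (-2 : ℝ) * sqrt2_mul_self

/-- The differential of `hopf`, as a linear map. -/
noncomputable def dHlin (x : Fin 4 → ℝ) : (Fin 4 → ℝ) →ₗ[ℝ] (Fin 3 → ℝ) where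
  toFun v := (1 / (2 * Real.sqrt 2)) •
    ![2 * (v 0 * x 2 + x 0 * v 2 + v 1 * x 3 + x 1 * v 3),
      2 * (v 1 * x 2 + x 1 * v 2 - v 0 * x 3 - x 0 * v 3),
      2 * (x 0 * v 0 + x 1 * v 1 - x 2 * v 2 - x 3 * v 3)]
  map_add' u v := by
    funext i
    fin_cases i <;>
      simp [Matrix.cons_val_zero, Matrix.cons_val_one, Matrix.head_cons] <;> ring
  map_smul' c v := by
    funext i
    fin_cases i <;>
      simp [Matrix.cons_val_zero, Matrix.cons_val_one, Matrix.head_cons] <;> ring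

noncomputable def dH (x : Fin 4 → ℝ) : (Fin 4 → ℝ) →L[ℝ] (Fin 3 → ℝ) :=
  (dHlin x).toContinuousLinearMap

lemma hopf_hasFDerivAt (x : Fin 4 → ℝ) : HasFDerivAt hopf (dH x) x := by
  apply hasFDerivAt_pi''
  intro i
  have h0 : HasFDerivAt (fun f : Fin 4 → ℝ => f 0)
      (ContinuousLinearMap.proj 0 : (Fin 4 → ℝ) →L[ℝ] ℝ) x := hasFDerivAt_apply (𝕜 := ℝ) _ _
  have h1 : HasFDerivAt (fun f : Fin 4 → ℝ => f 1)
      (ContinuousLinearMap.proj 1 : (Fin 4 → ℝ) →L[ℝ] ℝ) x := hasFDerivAt_apply (𝕜 := ℝ) _ _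
  have h2 : HasFDerivAt (fun f : Fin 4 → ℝ => f 2)
      (ContinuousLinearMap.proj 2 : (Fin 4 → ℝ) →L[ℝ] ℝ) x := hasFDerivAt_apply (𝕜 := ℝ) _ _
  have h3 : HasFDerivAt (fun f : Fin 4 → ℝ => f 3)
      (ContinuousLinearMap.proj 3 : (Fin 4 → ℝ) →L[ℝ] ℝ) x := hasFDerivAt_apply (𝕜 := ℝ) _ _
  fin_cases i
  · show HasFDerivAt (fun y : Fin 4 → ℝ => hopf y 0)
      ((ContinuousLinearMap.proj 0).comp (dH x)) x
    have hfun : (fun y : Fin 4 → ℝ => hopf y 0)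
        = fun y : Fin 4 → ℝ => 1 / (2 * Real.sqrt 2) * (y 0 * y 2 + y 1 * y 3 + (y 0 * y 2 + y 1 * y 3)) := by
      funext y
      simp only [hopf, Pi.smul_apply, smul_eq_mul, Matrix.cons_val_zero]
      ring
    rw [hfun]
    refine ((((h0.mul h2).add (h1.mul h3)).add ((h0.mul h2).add (h1.mul h3))).const_mul
      (1 / (2 * Real.sqrt 2))).congr_fderiv ?_
    refine ContinuousLinearMap.ext fun v => ?_
    simp [dH, dHlin]
    ring
  · show HasFDerivAt (fun y : Fin 4 → ℝ => hopf y 1)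
      ((ContinuousLinearMap.proj 1).comp (dH x)) x
    have hfun : (fun y : Fin 4 → ℝ => hopf y 1)
        = fun y : Fin 4 → ℝ => 1 / (2 * Real.sqrt 2) * (y 1 * y 2 - y 0 * y 3 + (y 1 * y 2 - y 0 * y 3)) := by
      funext y
      simp only [hopf, Pi.smul_apply, smul_eq_mul, Matrix.cons_val_one, Matrix.head_cons,
        Matrix.cons_val_zero]
      ring
    rw [hfun]
    refine ((((h1.mul h2).sub (h0.mul h3)).add ((h1.mul h2).sub (h0.mul h3))).const_mul
      (1 / (2 * Real.sqrt 2))).congr_fderiv ?_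
    refine ContinuousLinearMap.ext fun v => ?_
    simp [dH, dHlin]
    ring
  · show HasFDerivAt (fun y : Fin 4 → ℝ => hopf y 2)
      ((ContinuousLinearMap.proj 2).comp (dH x)) x
    have hfun : (fun y : Fin 4 → ℝ => hopf y 2)
        = fun y : Fin 4 → ℝ => 1 / (2 * Real.sqrt 2) * (y 0 * y 0 + y 1 * y 1 - y 2 * y 2 - y 3 * y 3) := by
      funext y
      simp only [hopf, Pi.smul_apply, smul_eq_mul, Matrix.cons_val_two, Matrix.tail_cons,
        Matrix.head_cons]
      ring
    rw [hfun]
    refine (((((h0.mul h0).add (h1.mul h1)).sub (h2.mul h2)).sub (h3.mul h3)).const_mul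
      (1 / (2 * Real.sqrt 2))).congr_fderiv ?_
    refine ContinuousLinearMap.ext fun v => ?_
    simp [dH, dHlin]
    ring

lemma fderiv_hopf (x : Fin 4 → ℝ) : fderiv ℝ hopf x = dH x :=
  (hopf_hasFDerivAt x).fderiv

lemma E2_spec (x : Fin 4 → ℝ) :
    dH x (X₂ x) = ![(x 0 ^ 2 - x 1 ^ 2 - x 2 ^ 2 + x 3 ^ 2) / 2,
      x 0 * x 1 + x 2 * x 3, x 1 * x 3 - x 0 * x 2] := by
  have h2 := sqrt2_mul_self
  have hne := sqrt2_ne_zero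
  funext i
  fin_cases i
  · simp [dH, dHlin, X₂, mul_inv_rev, sqrt2_inv]
    linear_combination ((x 0 ^ 2 - x 1 ^ 2 - x 2 ^ 2 + x 3 ^ 2) / 4) * h2
  · simp [dH, dHlin, X₂, mul_inv_rev, sqrt2_inv]
    linear_combination ((x 0 * x 1 + x 2 * x 3) / 2) * h2
  · simp [dH, dHlin, X₂, mul_inv_rev, sqrt2_inv]
    linear_combination ((x 1 * x 3 - x 0 * x 2) / 2) * h2

lemma E3_spec (x : Fin 4 → ℝ) :
    dH x (X₃ x) = ![x 0 * x 1 - x 2 * x 3,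
      (-x 0 ^ 2 + x 1 ^ 2 - x 2 ^ 2 + x 3 ^ 2) / 2, -(x 0 * x 3) - x 1 * x 2] := by
  have h2 := sqrt2_mul_self
  have hne := sqrt2_ne_zero
  funext i
  fin_cases i
  · simp [dH, dHlin, X₃, mul_inv_rev, sqrt2_inv]
    linear_combination ((x 0 * x 1 - x 2 * x 3) / 2) * h2
  · simp [dH, dHlin, X₃, mul_inv_rev, sqrt2_inv]
    linear_combination ((-x 0 ^ 2 + x 1 ^ 2 - x 2 ^ 2 + x 3 ^ 2) / 4) * h2
  · simp [dH, dHlin, X₃, mul_inv_rev, sqrt2_inv]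
    linear_combination ((-(x 0 * x 3) - x 1 * x 2) / 2) * h2

lemma hopf_spec (x : Fin 4 → ℝ) :
    hopf x = (Real.sqrt 2 / 4) •
      ![2 * x 0 * x 2 + 2 * x 1 * x 3,
        2 * x 1 * x 2 - 2 * x 0 * x 3,
        x 0 ^ 2 + x 1 ^ 2 - x 2 ^ 2 - x 3 ^ 2] := by
  rw [hopf, hopf_coeff]

/-- For every `x ∈ S³(√2)`, the images `dψₓ(X₂(x))` and `dψₓ(X₃(x))`
form an orthonormal basis of the tangent space of `S²(1/√2)` at `ψ(x)`
(the space of vectors orthogonal to `ψ(x)` in ℝ³). -/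
theorem dpsi_X₂_X₃_orthonormal_basis (x : Fin 4 → ℝ) (hx : ∑ i, x i ^ 2 = 2) :
    (∑ i, fderiv ℝ hopf x (X₂ x) i * fderiv ℝ hopf x (X₂ x) i = 1) ∧
    (∑ i, fderiv ℝ hopf x (X₃ x) i * fderiv ℝ hopf x (X₃ x) i = 1) ∧
    (∑ i, fderiv ℝ hopf x (X₂ x) i * fderiv ℝ hopf x (X₃ x) i = 0) ∧
    (∑ i, fderiv ℝ hopf x (X₂ x) i * hopf x i = 0) ∧
    (∑ i, fderiv ℝ hopf x (X₃ x) i * hopf x i = 0) ∧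
    (∀ v : Fin 3 → ℝ, (∑ i, v i * hopf x i = 0) →
      ∃ a b : ℝ, v = a • fderiv ℝ hopf x (X₂ x) + b • fderiv ℝ hopf x (X₃ x)) := by
  have hx4 : x 0 ^ 2 + x 1 ^ 2 + x 2 ^ 2 + x 3 ^ 2 = 2 := by
    simpa [Fin.sum_univ_four] using hx
  have h2 := sqrt2_mul_self
  rw [fderiv_hopf, E2_spec, E3_spec]
  refine ⟨?_, ?_, ?_, ?_, ?_, ?_⟩
  · simp [Fin.sum_univ_three]
    linear_combination (1/2 + (x 0 ^ 2 + x 1 ^ 2 + x 2 ^ 2 + x 3 ^ 2)/4) * hx4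
  · simp [Fin.sum_univ_three]
    linear_combination (1/2 + (x 0 ^ 2 + x 1 ^ 2 + x 2 ^ 2 + x 3 ^ 2)/4) * hx4
  · simp [Fin.sum_univ_three]
    ring
  · rw [hopf_spec]
    simp [Fin.sum_univ_three]
    ring
  · rw [hopf_spec]
    simp [Fin.sum_univ_three]
    ring
  · intro v hv
    rw [hopf_spec] at hv
    simp only [Fin.sum_univ_three, Pi.smul_apply, smul_eq_mul, Matrix.cons_val_zero,
      Matrix.cons_val_one, Matrix.head_cons, Matrix.cons_val_two, Matrix.tail_cons] at hv
    refine ⟨v 0 * ((x 0 ^ 2 - x 1 ^ 2 - x 2 ^ 2 + x 3 ^ 2) / 2)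
        + v 1 * (x 0 * x 1 + x 2 * x 3) + v 2 * (x 1 * x 3 - x 0 * x 2),
      v 0 * (x 0 * x 1 - x 2 * x 3)
        + v 1 * ((-x 0 ^ 2 + x 1 ^ 2 - x 2 ^ 2 + x 3 ^ 2) / 2)
        + v 2 * (-(x 0 * x 3) - x 1 * x 2), ?_⟩
    funext i
    fin_cases i
    · simp
      linear_combination (Real.sqrt 2 / 2 * (2 * x 0 * x 2 + 2 * x 1 * x 3)) * hv +
        (-(v 0) * (1/2 + (x 0 ^ 2 + x 1 ^ 2 + x 2 ^ 2 + x 3 ^ 2)/4)) * hx4 +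
        (-(1/8) * (2 * x 0 * x 2 + 2 * x 1 * x 3) *
          (v 0 * (2 * x 0 * x 2 + 2 * x 1 * x 3)
            + v 1 * (2 * x 1 * x 2 - 2 * x 0 * x 3)
            + v 2 * (x 0 ^ 2 + x 1 ^ 2 - x 2 ^ 2 - x 3 ^ 2))) * h2
    · simp
      linear_combination (Real.sqrt 2 / 2 * (2 * x 1 * x 2 - 2 * x 0 * x 3)) * hv +
        (-(v 1) * (1/2 + (x 0 ^ 2 + x 1 ^ 2 + x 2 ^ 2 + x 3 ^ 2)/4)) * hx4 +
        (-(1/8) * (2 * x 1 * x 2 - 2 * x 0 * x 3) *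
          (v 0 * (2 * x 0 * x 2 + 2 * x 1 * x 3)
            + v 1 * (2 * x 1 * x 2 - 2 * x 0 * x 3)
            + v 2 * (x 0 ^ 2 + x 1 ^ 2 - x 2 ^ 2 - x 3 ^ 2))) * h2
    · simp
      linear_combination (Real.sqrt 2 / 2 * (x 0 ^ 2 + x 1 ^ 2 - x 2 ^ 2 - x 3 ^ 2)) * hv +
        (-(v 2) * (1/2 + (x 0 ^ 2 + x 1 ^ 2 + x 2 ^ 2 + x 3 ^ 2)/4)) * hx4 +
        (-(1/8) * (x 0 ^ 2 + x 1 ^ 2 - x 2 ^ 2 - x 3 ^ 2) *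
          (v 0 * (2 * x 0 * x 2 + 2 * x 1 * x 3)
            + v 1 * (2 * x 1 * x 2 - 2 * x 0 * x 3)
            + v 2 * (x 0 ^ 2 + x 1 ^ 2 - x 2 ^ 2 - x 3 ^ 2))) * h2
end

section
/- The vector fields X₄, X₅, X₆ on S³(√2) are ψ-related to the Killing fields Y₁, Y₂, Y₃ on S²(1/√2) respectively: for all x ∈ S³(√2), dψₓ(X₄(x)) = Y₁(ψ(x)), dψₓ(X₅(x)) = Y₂(ψ(x)), and dψₓ(X₆(x)) = Y₃(ψ(x)). -/
open scoped BigOperators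

noncomputable def X₄ (x : Fin 4 → ℝ) : Fin 4 → ℝ :=
  (Real.sqrt 2)⁻¹ • ![-(x 1), x 0, x 3, -(x 2)]

noncomputable def X₅ (x : Fin 4 → ℝ) : Fin 4 → ℝ :=
  (Real.sqrt 2)⁻¹ • ![-(x 2), -(x 3), x 0, x 1]

noncomputable def X₆ (x : Fin 4 → ℝ) : Fin 4 → ℝ :=
  (Real.sqrt 2)⁻¹ • ![-(x 3), x 2, -(x 1), x 0]

noncomputable def Y₁ (y : Fin 3 → ℝ) : Fin 3 → ℝ :=
  Real.sqrt 2 • ![-(y 1), y 0, 0]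

noncomputable def Y₂ (y : Fin 3 → ℝ) : Fin 3 → ℝ :=
  Real.sqrt 2 • ![y 2, 0, -(y 0)]

noncomputable def Y₃ (y : Fin 3 → ℝ) : Fin 3 → ℝ :=
  Real.sqrt 2 • ![0, -(y 2), y 1]

/-- Abbreviation for the coordinate projections as continuous linear maps. -/
noncomputable def hopfPr (i : Fin 4) : (Fin 4 → ℝ) →L[ℝ] ℝ :=
  ContinuousLinearMap.proj i

/-- Explicit formula for the differential of the Hopf map. -/
lemma hopf_fderiv (x v : Fin 4 → ℝ) :
    fderiv ℝ hopf x v = (1 / (2 * Real.sqrt 2)) •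
      ![2 * v 0 * x 2 + 2 * x 0 * v 2 + (2 * v 1 * x 3 + 2 * x 1 * v 3),
        2 * v 1 * x 2 + 2 * x 1 * v 2 - (2 * v 0 * x 3 + 2 * x 0 * v 3),
        2 * x 0 * v 0 + 2 * x 1 * v 1 - 2 * x 2 * v 2 - 2 * x 3 * v 3] := by
  have p : ∀ i : Fin 4, HasFDerivAt (fun y : Fin 4 → ℝ => y i) (hopfPr i) x :=
    fun i => hasFDerivAt_apply (𝕜 := ℝ) i x
  have h0 := (((p 0).const_mul (2:ℝ)).mul (p 2)).add (((p 1).const_mul (2:ℝ)).mul (p 3))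
  have h1 := (((p 1).const_mul (2:ℝ)).mul (p 2)).sub (((p 0).const_mul (2:ℝ)).mul (p 3))
  have h2 := ((((p 0).mul (p 0)).add ((p 1).mul (p 1))).sub ((p 2).mul (p 2))).sub
    ((p 3).mul (p 3))
  set E0 : (Fin 4 → ℝ) →L[ℝ] ℝ :=
    (2 * x 0) • hopfPr 2 + x 2 • (2:ℝ) • hopfPr 0 +
      ((2 * x 1) • hopfPr 3 + x 3 • (2:ℝ) • hopfPr 1) with hE0
  set E1 : (Fin 4 → ℝ) →L[ℝ] ℝ :=
    (2 * x 1) • hopfPr 2 + x 2 • (2:ℝ) • hopfPr 1 -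
      ((2 * x 0) • hopfPr 3 + x 3 • (2:ℝ) • hopfPr 0) with hE1
  set E2 : (Fin 4 → ℝ) →L[ℝ] ℝ :=
    x 0 • hopfPr 0 + x 0 • hopfPr 0 + (x 1 • hopfPr 1 + x 1 • hopfPr 1) -
      (x 2 • hopfPr 2 + x 2 • hopfPr 2) - (x 3 • hopfPr 3 + x 3 • hopfPr 3) with hE2
  have hL : HasFDerivAt hopf
      ((1 / (2 * Real.sqrt 2)) • ContinuousLinearMap.pi ![E0, E1, E2]) x := by
    have hhopf : hopf = fun y => (1 / (2 * Real.sqrt 2)) •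
        (fun i : Fin 3 => (![fun y : Fin 4 → ℝ => 2 * y 0 * y 2 + 2 * y 1 * y 3,
          fun y => 2 * y 1 * y 2 - 2 * y 0 * y 3,
          fun y => y 0 ^ 2 + y 1 ^ 2 - y 2 ^ 2 - y 3 ^ 2] :
          Fin 3 → (Fin 4 → ℝ) → ℝ) i y) := by
      funext y i
      fin_cases i <;> simp [hopf]
    rw [hhopf]
    refine HasFDerivAt.fun_const_smul (hasFDerivAt_pi.2 ?_) _
    intro i
    fin_cases i
    · exact h0
    · exact h1
    · simp only [pow_two]; exact h2
  rw [hL.fderiv]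
  funext j
  fin_cases j <;>
    simp [hE0, hE1, hE2, hopfPr, ContinuousLinearMap.pi_apply, Pi.smul_apply, smul_eq_mul,
      ContinuousLinearMap.add_apply, ContinuousLinearMap.sub_apply,
      ContinuousLinearMap.smul_apply, ContinuousLinearMap.proj_apply] <;> ring

set_option maxHeartbeats 1000000 in
/-- `X₄, X₅, X₆` are ψ-related to the Killing fields `Y₁, Y₂, Y₃`:
for all `x ∈ S³(√2)`, `dψₓ(X₄(x)) = Y₁(ψ(x))`, `dψₓ(X₅(x)) = Y₂(ψ(x))`,
`dψₓ(X₆(x)) = Y₃(ψ(x))`. -/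
theorem X₄_X₅_X₆_psi_related (x : Fin 4 → ℝ) (hx : ∑ i, x i ^ 2 = 2) :
    fderiv ℝ hopf x (X₄ x) = Y₁ (hopf x) ∧
    fderiv ℝ hopf x (X₅ x) = Y₂ (hopf x) ∧
    fderiv ℝ hopf x (X₆ x) = Y₃ (hopf x) := by
  have hs : Real.sqrt 2 * Real.sqrt 2 = 2 := Real.mul_self_sqrt (by norm_num)
  have hs0 : Real.sqrt 2 ≠ 0 := by positivity
  have hs2 : Real.sqrt 2 ^ 2 = 2 := by rw [pow_two, hs]
  have hs3 : Real.sqrt 2 ^ 3 = 2 * Real.sqrt 2 := by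
    rw [pow_succ, pow_two, hs]
  have hs4 : Real.sqrt 2 ^ 4 = 4 := by
    rw [show (4:ℕ) = 2 + 2 from rfl, pow_add, hs2]; norm_num
  have hx' : x 0 ^ 2 + x 1 ^ 2 + x 2 ^ 2 + x 3 ^ 2 = 2 := by
    simpa [Fin.sum_univ_four] using hx
  refine ⟨?_, ?_, ?_⟩
  · rw [hopf_fderiv]
    funext j
    fin_cases j <;>
      simp [X₄, Y₁, hopf, Pi.smul_apply, smul_eq_mul] <;>
      field_simp <;> ring_nf <;> (try simp only [hs2, hs3, hs4]) <;> ring_nf <;>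
      nlinarith [hs, hs3, hx']
  · rw [hopf_fderiv]
    funext j
    fin_cases j <;>
      simp [X₅, Y₂, hopf, Pi.smul_apply, smul_eq_mul] <;>
      field_simp <;> ring_nf <;> (try simp only [hs2, hs3, hs4]) <;> ring_nf <;>
      nlinarith [hs, hs3, hx']
  · rw [hopf_fderiv]
    funext j
    fin_cases j <;>
      simp [X₆, Y₃, hopf, Pi.smul_apply, smul_eq_mul] <;>
      field_simp <;> ring_nf <;> (try simp only [hs2, hs3, hs4]) <;> ring_nf <;>
      nlinarith [hs, hs3, hx']
end
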